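/- Let N ≥ 1, Δt > 0, and fix one grid cell. Let l₁, …, l_N > 0 with Σ_α l_α = 1, let H > 0 and set h_α = l_α·H. Let h*_α ≥ 0 and φ*_α be real numbers, and let G_{1/2} = G_{N+1/2} = 0 and G_{3/2}, …, G_{N−1/2} be real numbers such that h_α = h*_α + Δt·(G_{α+1/2} − G_{α−1/2}) for every α. Suppose the real numbers φ₁, …, φ_N solve the implicit system h_α·φ_α = h*_α·φ*_α + Δt·(φ_{α+1/2}·G_{α+1/2} − φ_{α−1/2}·G_{α−1/2}) for all α, where φ_{α+1/2} = φ_α if G_{α+1/2} ≤ 0 and φ_{α+1/2} = φ_{α+1} if G_{α+1/2} > 0. Then min_{β∈{1,…,N}} φ*_β ≤ φ_α ≤ max_{β∈{1,…,N}} φ*_β for every α, without any restriction on Δt. -/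

import Mathlib

theorem stmt6_aux (N : ℕ) (hN : 1 ≤ N) (Δt : ℝ) (hΔt : 0 < Δt)
    (l : ℕ → ℝ) (hl : ∀ α ∈ Finset.Icc 1 N, 0 < l α)
    (H : ℝ) (hH : 0 < H)
    (h : ℕ → ℝ) (hdef : ∀ α, h α = l α * H)
    (hstar φstar : ℕ → ℝ)
    (hhstar : ∀ α ∈ Finset.Icc 1 N, 0 ≤ hstar α)
    (G : ℕ → ℝ) (hG0 : G 0 = 0) (hGN : G N = 0)
    (hrel : ∀ α ∈ Finset.Icc 1 N, h α = hstar α + Δt * (G α - G (α - 1)))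
    (φ : ℕ → ℝ) (φhalf : ℕ → ℝ)
    (hφhalf : ∀ α, φhalf α = if G α ≤ 0 then φ α else φ (α + 1))
    (himpl : ∀ α ∈ Finset.Icc 1 N,
      h α * φ α = hstar α * φstar α + Δt * (φhalf α * G α - φhalf (α - 1) * G (α - 1))) :
    ∀ α ∈ Finset.Icc 1 N,
      φ α ≤ (Finset.Icc 1 N).sup' ⟨1, Finset.mem_Icc.mpr ⟨le_refl 1, hN⟩⟩ φstar := by
  set M := (Finset.Icc 1 N).sup' ⟨1, Finset.mem_Icc.mpr ⟨le_refl 1, hN⟩⟩ φstar with hM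
  have hφstarM : ∀ γ ∈ Finset.Icc 1 N, φstar γ ≤ M := fun γ hγ => Finset.le_sup' φstar hγ
  -- the key per-index algebraic step
  have step : ∀ β, 1 ≤ β → β ≤ N → (∀ γ ∈ Finset.Icc 1 N, φ γ ≤ φ β) →
      φ β ≤ M ∨ (0 < G β ∧ β < N ∧ φ (β + 1) = φ β)
        ∨ (G β ≤ 0 ∧ G (β - 1) < 0 ∧ 2 ≤ β ∧ φ (β - 1) = φ β) := by
    intro β hβ1 hβN hmax
    have mem : β ∈ Finset.Icc 1 N := Finset.mem_Icc.mpr ⟨hβ1, hβN⟩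
    set A := (φhalf β - φ β) * G β with hAdef
    set B := (φhalf (β - 1) - φ β) * G (β - 1) with hBdef
    have hkey : hstar β * (φ β - φstar β) = Δt * (A - B) := by
      have e1 := himpl β mem
      have e2 := hrel β mem
      rw [hAdef, hBdef]; linear_combination e1 - φ β * e2
    -- facts about A
    have hAfacts : A ≤ 0 ∧ (0 < G β → β < N ∧ (A = 0 → φ (β + 1) = φ β)) := by
      by_cases hGβ : G β ≤ 0
      · constructor
        · rw [hAdef, hφhalf β, if_pos hGβ]; ring_nf; simp
        · intro hGβ'; linarith
      · push_neg at hGβ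
        have hβN' : β < N := by
          rcases lt_or_eq_of_le hβN with h' | h'
          · exact h'
          · exfalso; rw [h'] at hGβ; rw [hGN] at hGβ; exact lt_irrefl 0 hGβ
        have hup : φ (β + 1) ≤ φ β :=
          hmax (β + 1) (Finset.mem_Icc.mpr ⟨by omega, by omega⟩)
        have hhalf : φhalf β = φ (β + 1) := by
          rw [hφhalf β, if_neg (not_le.mpr hGβ)]
        constructor
        · rw [hAdef, hhalf]
          exact mul_nonpos_of_nonpos_of_nonneg (by linarith) (le_of_lt hGβ)
        · intro _
          refine ⟨hβN', fun hA0 => ?_⟩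
          rw [hAdef, hhalf] at hA0
          rcases mul_eq_zero.mp hA0 with h' | h'
          · linarith
          · exact absurd h' (ne_of_gt hGβ)
    -- facts about B
    have hBfacts : 0 ≤ B ∧ (G (β - 1) < 0 → 2 ≤ β ∧ (B = 0 → φ (β - 1) = φ β)) := by
      by_cases hGp : G (β - 1) ≤ 0
      · rcases Nat.lt_or_ge β 2 with hβ2 | hβ2
        · have hβeq : β = 1 := by omega
          constructor
          · rw [hBdef, hβeq]; simp [hG0]
          · intro hc; exfalso; rw [hβeq] at hc; simp [hG0] at hc
        · have hdown : φ (β - 1) ≤ φ β :=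
            hmax (β - 1) (Finset.mem_Icc.mpr ⟨by omega, by omega⟩)
          have hhalf : φhalf (β - 1) = φ (β - 1) := by
            rw [hφhalf (β - 1), if_pos hGp]
          constructor
          · rw [hBdef, hhalf]
            nlinarith [hdown, hGp]
          · intro hGp'
            refine ⟨hβ2, fun hB0 => ?_⟩
            rw [hBdef, hhalf] at hB0
            rcases mul_eq_zero.mp hB0 with h' | h'
            · linarith
            · exact absurd h' (ne_of_lt hGp')
      · push_neg at hGp
        have hsucc : β - 1 + 1 = β := by omega
        have hhalf : φhalf (β - 1) = φ β := by
          rw [hφhalf (β - 1), if_neg (not_le.mpr hGp), hsucc]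
        have hB0 : B = 0 := by rw [hBdef, hhalf]; ring
        exact ⟨le_of_eq hB0.symm, fun hc => absurd hc (not_lt.mpr (le_of_lt hGp))⟩
    have hABle : Δt * (A - B) ≤ 0 := by
      have : A - B ≤ 0 := by linarith [hAfacts.1, hBfacts.1]
      exact mul_nonpos_of_nonneg_of_nonpos (le_of_lt hΔt) this
    rcases (hhstar β mem).lt_or_eq with hpos | hzero
    · -- hstar β > 0
      left
      have : φ β - φstar β ≤ 0 := by
        by_contra hc
        push_neg at hc
        nlinarith [hkey]
      linarith [hφstarM β mem]
    · -- hstar β = 0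
      have hzero' : hstar β = 0 := hzero.symm
      have hAB0 : A - B = 0 := by
        have : Δt * (A - B) = 0 := by rw [← hkey, hzero']; ring
        exact (mul_eq_zero.mp this).resolve_left (ne_of_gt hΔt)
      have hA0 : A = 0 := by linarith [hAfacts.1, hBfacts.1]
      have hB0 : B = 0 := by linarith
      have hhpos : 0 < h β := by rw [hdef β]; exact mul_pos (hl β mem) hH
      have hGdiff : G (β - 1) < G β := by
        have := hrel β mem
        rw [hzero'] at this
        nlinarith
      by_cases hGβ : 0 < G β
      · obtain ⟨hβN', himp⟩ := hAfacts.2 hGβ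
        exact Or.inr (Or.inl ⟨hGβ, hβN', himp hA0⟩)
      · push_neg at hGβ
        have hGp : G (β - 1) < 0 := lt_of_lt_of_le hGdiff hGβ
        obtain ⟨hβ2, himp⟩ := hBfacts.2 hGp
        exact Or.inr (Or.inr ⟨hGβ, hGp, hβ2, himp hB0⟩)
  -- downward propagation
  have down : ∀ β, β ≤ N → 1 ≤ β → G β ≤ 0 → (∀ γ ∈ Finset.Icc 1 N, φ γ ≤ φ β) →
      φ β ≤ M := by
    intro β
    induction β using Nat.strong_induction_on with
    | _ β ih =>
      intro hβN hβ1 hGβ hmax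
      rcases step β hβ1 hβN hmax with h1 | ⟨hg, _, _⟩ | ⟨_, hg, hβ2, heq⟩
      · exact h1
      · linarith
      · have hmax' : ∀ γ ∈ Finset.Icc 1 N, φ γ ≤ φ (β - 1) := by
          intro γ hγ; rw [heq]; exact hmax γ hγ
        have := ih (β - 1) (by omega) (by omega) (by omega) (le_of_lt hg) hmax'
        linarith [heq ▸ this]
  -- upward propagation
  have up : ∀ k β, N - β ≤ k → 1 ≤ β → β ≤ N → (∀ γ ∈ Finset.Icc 1 N, φ γ ≤ φ β) →
      φ β ≤ M := by
    intro k
    induction k with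
    | zero =>
      intro β hk hβ1 hβN hmax
      have hβeq : β = N := by omega
      exact down β hβN hβ1 (by rw [hβeq, hGN]) hmax
    | succ k ih =>
      intro β hk hβ1 hβN hmax
      rcases step β hβ1 hβN hmax with h1 | ⟨_, hlt, heq⟩ | ⟨hGle, _, _, _⟩
      · exact h1
      · have hmax' : ∀ γ ∈ Finset.Icc 1 N, φ γ ≤ φ (β + 1) := by
          intro γ hγ; rw [heq]; exact hmax γ hγ
        have := ih (β + 1) (by omega) (by omega) (by omega) hmax'
        linarith [heq ▸ this]
      · exact down β hβN hβ1 hGle hmax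
  -- conclude
  obtain ⟨β₀, hβ₀mem, hβ₀max⟩ :=
    Finset.exists_max_image (Finset.Icc 1 N) φ ⟨1, Finset.mem_Icc.mpr ⟨le_refl 1, hN⟩⟩
  obtain ⟨hβ₀1, hβ₀N⟩ := Finset.mem_Icc.mp hβ₀mem
  intro α hα
  exact le_trans (hβ₀max α hα) (up N β₀ (by omega) hβ₀1 hβ₀N hβ₀max)

theorem stmt6 (N : ℕ) (hN : 1 ≤ N) (Δt : ℝ) (hΔt : 0 < Δt)
    (l : ℕ → ℝ) (hl : ∀ α ∈ Finset.Icc 1 N, 0 < l α)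
    (hlsum : ∑ α ∈ Finset.Icc 1 N, l α = 1)
    (H : ℝ) (hH : 0 < H)
    (h : ℕ → ℝ) (hdef : ∀ α, h α = l α * H)
    (hstar φstar : ℕ → ℝ)
    (hhstar : ∀ α ∈ Finset.Icc 1 N, 0 ≤ hstar α)
    (G : ℕ → ℝ) (hG0 : G 0 = 0) (hGN : G N = 0)
    (hrel : ∀ α ∈ Finset.Icc 1 N, h α = hstar α + Δt * (G α - G (α - 1)))
    (φ : ℕ → ℝ)
    (φhalf : ℕ → ℝ)
    (hφhalf : ∀ α, φhalf α = if G α ≤ 0 then φ α else φ (α + 1))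
    (himpl : ∀ α ∈ Finset.Icc 1 N,
      h α * φ α = hstar α * φstar α + Δt * (φhalf α * G α - φhalf (α - 1) * G (α - 1))) :
    ∀ α ∈ Finset.Icc 1 N,
      (Finset.Icc 1 N).inf' ⟨1, Finset.mem_Icc.mpr ⟨le_refl 1, hN⟩⟩ φstar ≤ φ α
      ∧ φ α ≤ (Finset.Icc 1 N).sup' ⟨1, Finset.mem_Icc.mpr ⟨le_refl 1, hN⟩⟩ φstar := by
  have hne : (Finset.Icc 1 N).Nonempty := ⟨1, Finset.mem_Icc.mpr ⟨le_refl 1, hN⟩⟩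
  have hsup := stmt6_aux N hN Δt hΔt l hl H hH h hdef hstar φstar hhstar G hG0 hGN hrel
    φ φhalf hφhalf himpl
  have hinf := stmt6_aux N hN Δt hΔt l hl H hH h hdef hstar (fun α => -φstar α) hhstar
    G hG0 hGN hrel (fun α => -φ α) (fun α => -φhalf α)
    (fun α => by rw [hφhalf α, apply_ite Neg.neg])
    (fun α hα => by linear_combination (-1 : ℝ) * himpl α hα)
  intro α hα
  refine ⟨?_, hsup α hα⟩
  have h1 := hinf α hα
  have h2 : (Finset.Icc 1 N).sup' hne (fun α => -φstar α) ≤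
      -(Finset.Icc 1 N).inf' hne φstar := by
    apply Finset.sup'_le
    intro b hb
    simp only [neg_le_neg_iff]
    exact Finset.inf'_le φstar hb
  have : -φ α ≤ -(Finset.Icc 1 N).inf' hne φstar := le_trans h1 h2
  linarith
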